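/- Let {a_s}_{s≥1} and {b_s}_{s≥1} be two sequences of positive integers with a_s → ∞ and b_s → ∞ as s → ∞, and for each s let μ(s) = (b_s^{a_s}) be the rectangular partition of a_s·b_s with a_s rows of length b_s. Then for every real β > 0 there exists s_0 such that for every s ≥ s_0, f^{μ(s)} > β^{a_s b_s}. -/

import Mathlib

/-- The rectangular Young diagram with `a` rows of length `b`. -/
def rect (a b : ℕ) : YoungDiagram where
  cells := Finset.range a ×ˢ Finset.range b
  isLowerSet := by
    intro x y h hm
    simp only [Finset.coe_product, Set.mem_prod, Set.mem_setOf_eq, Finset.mem_coe, Finset.mem_range] at hm ⊢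
    obtain ⟨h1, h2⟩ := h
    exact ⟨lt_of_le_of_lt h1 hm.1, lt_of_le_of_lt h2 hm.2⟩

/-- The hook length of the (0-indexed) cell `(i, j)` of a Young diagram. -/
def hookLen (μ : YoungDiagram) (i j : ℕ) : ℕ :=
  (μ.rowLen i - (j + 1)) + (μ.colLen j - (i + 1)) + 1

/-- `T : ℕ × ℕ → ℕ` is a standard Young tableau of shape `μ` (with `μ.card` cells):
it fills the cells of `μ` bijectively with the numbers `1, …, μ.card`, is zero
outside `μ`, and is strictly increasing along rows and down columns. -/
def IsSYT (μ : YoungDiagram) (T : ℕ × ℕ → ℕ) : Prop :=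
  (∀ c ∈ μ.cells, T c ∈ Finset.Icc 1 μ.card) ∧
  (∀ c ∉ μ.cells, T c = 0) ∧
  Set.InjOn T ↑μ.cells ∧
  (∀ i j1 j2 : ℕ, j1 < j2 → (i, j2) ∈ μ → T (i, j1) < T (i, j2)) ∧
  (∀ i1 i2 j : ℕ, i1 < i2 → (i2, j) ∈ μ → T (i1, j) < T (i2, j))

/-- `fdeg μ`, the degree of the ordinary irreducible character of the symmetric
group associated to `μ`, i.e. the number of standard Young tableaux of shape `μ`. -/
noncomputable def fdeg (μ : YoungDiagram) : ℕ :=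
  Nat.card { T : ℕ × ℕ → ℕ // IsSYT μ T }

/-- The diagonal (Durfee square size) of a Young diagram: the number of diagonal
cells, i.e. the side of the largest square contained in it. -/
def durfee (μ : YoungDiagram) : ℕ :=
  (μ.cells.filter fun c => c.1 = c.2).card

open Classical in
/-- The quantity ρ of the paper: `δ²` when `α ∈ ℕ`, and `⌊δ²/(α − ⌊α⌋)⌋ + 1` otherwise. -/
noncomputable def rho (α : ℝ) (δ : ℕ) : ℕ :=
  if ∃ m : ℕ, (m : ℝ) = α then δ ^ 2
  else ⌊(δ : ℝ) ^ 2 / (α - ⌊α⌋₊)⌋₊ + 1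

namespace Stmt6Aux

/-- offset of the first cell of antidiagonal `d` in a `b`-column rectangle. -/
def i0 (b d : ℕ) : ℕ := d + 1 - b

/-- the length of antidiagonal `d` of the `a × b` rectangle. -/
def len (a b d : ℕ) : ℕ := min (d + 1) a - i0 b d

/-- number of cells on antidiagonals before `d`. -/
def off (a b d : ℕ) : ℕ := ∑ e ∈ Finset.range d, len a b e

lemma mem_rect {a b : ℕ} {c : ℕ × ℕ} : c ∈ rect a b ↔ c.1 < a ∧ c.2 < b := by
  rw [← YoungDiagram.mem_cells]
  show c ∈ Finset.range a ×ˢ Finset.range b ↔ _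
  simp [Finset.mem_product]

lemma card_rect (a b : ℕ) : (rect a b).card = a * b := by
  show (Finset.range a ×ˢ Finset.range b).card = a * b
  simp

lemma diag_lt {a b i j : ℕ} (hi : i < a) (hj : j < b) : i + j < a + b - 1 := by omega

lemma rank_lt {a b i j : ℕ} (hi : i < a) (hj : j < b) :
    i - i0 b (i + j) < len a b (i + j) := by
  unfold len i0; omega

lemma cell_spec {a b d s : ℕ} (hs : s < len a b d) :
    i0 b d + s < a ∧ d - (i0 b d + s) < b ∧ (i0 b d + s) + (d - (i0 b d + s)) = d ∧
      (i0 b d + s) - i0 b d = s := by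
  unfold len i0 at *; omega

lemma fiber_card (a b d : ℕ) :
    ((Finset.range a ×ˢ Finset.range b).filter (fun c => c.1 + c.2 = d)).card
      = len a b d := by
  rw [← Finset.card_range (len a b d)]
  apply Finset.card_bij' (i := fun c _ => c.1 - i0 b d)
    (j := fun s _ => (i0 b d + s, d - (i0 b d + s)))
  · intro c hc
    simp only [Finset.mem_filter, Finset.mem_product, Finset.mem_range] at hc
    obtain ⟨⟨h1, h2⟩, h3⟩ := hc
    rw [Finset.mem_range, ← h3]
    exact rank_lt h1 h2
  · intro s hs
    rw [Finset.mem_range] at hs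
    obtain ⟨h1, h2, h3, _⟩ := cell_spec hs
    simp only [Finset.mem_filter, Finset.mem_product, Finset.mem_range]
    exact ⟨⟨h1, h2⟩, h3⟩
  · intro c hc
    simp only [Finset.mem_filter, Finset.mem_product, Finset.mem_range] at hc
    obtain ⟨⟨h1, h2⟩, h3⟩ := hc
    have h4 : i0 b d ≤ c.1 := by subst h3; unfold i0; omega
    have : i0 b d + (c.1 - i0 b d) = c.1 := by omega
    rw [this]
    have : d - c.1 = c.2 := by omega
    rw [this]
  · intro s hs
    rw [Finset.mem_range] at hs
    exact (cell_spec hs).2.2.2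

lemma sum_len (a b : ℕ) : ∑ d ∈ Finset.range (a + b - 1), len a b d = a * b := by
  have h := Finset.card_eq_sum_card_fiberwise
    (f := fun c : ℕ × ℕ => c.1 + c.2) (s := Finset.range a ×ˢ Finset.range b)
    (t := Finset.range (a + b - 1)) (by
      intro c hc
      simp only [Finset.coe_product, Set.mem_prod, Finset.mem_coe, Finset.mem_product, Finset.mem_range] at hc ⊢
      exact diag_lt hc.1 hc.2)
  simp only [fiber_card] at h
  rw [← h]
  simp

lemma off_mono {a b d e : ℕ} (h : d ≤ e) : off a b d ≤ off a b e :=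
  Finset.sum_le_sum_of_subset (Finset.range_subset_range.2 h)

lemma off_add_len_le {a b d e : ℕ} (h : d < e) : off a b d + len a b d ≤ off a b e := by
  have h1 : off a b (d + 1) = off a b d + len a b d := Finset.sum_range_succ _ d
  rw [← h1]
  exact off_mono h

lemma off_le {a b d : ℕ} (h : d ≤ a + b - 1) : off a b d ≤ a * b := by
  rw [← sum_len a b]
  exact off_mono h


/-- apply the `d`-th permutation at rank `r`, as a function on naturals. -/
def app (a b : ℕ) (σ : ∀ d : Fin (a + b - 1), Equiv.Perm (Fin (len a b d))) (d r : ℕ) : ℕ :=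
  if h : d < a + b - 1 ∧ r < len a b d then (σ ⟨d, h.1⟩ ⟨r, h.2⟩ : ℕ) else 0

lemma app_lt_len {a b : ℕ} (σ : ∀ d : Fin (a + b - 1), Equiv.Perm (Fin (len a b d)))
    {d r : ℕ} (hd : d < a + b - 1) (hr : r < len a b d) :
    app a b σ d r < len a b d := by
  rw [app, dif_pos ⟨hd, hr⟩]
  exact (σ ⟨d, hd⟩ ⟨r, hr⟩).isLt

lemma app_inj {a b : ℕ} (σ : ∀ d : Fin (a + b - 1), Equiv.Perm (Fin (len a b d)))
    {d r r' : ℕ} (hd : d < a + b - 1) (hr : r < len a b d) (hr' : r' < len a b d)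
    (h : app a b σ d r = app a b σ d r') : r = r' := by
  rw [app, dif_pos ⟨hd, hr⟩, app, dif_pos ⟨hd, hr'⟩] at h
  have := (σ ⟨d, hd⟩).injective (Fin.ext h)
  exact congrArg Fin.val this

/-- the tableau associated to a family of permutations of the antidiagonals. -/
def Tf (a b : ℕ) (σ : ∀ d : Fin (a + b - 1), Equiv.Perm (Fin (len a b d))) :
    ℕ × ℕ → ℕ := fun c =>
  if c.1 < a ∧ c.2 < b then
    off a b (c.1 + c.2) + app a b σ (c.1 + c.2) (c.1 - i0 b (c.1 + c.2)) + 1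
  else 0

lemma Tf_isSYT (a b : ℕ) (σ : ∀ d : Fin (a + b - 1), Equiv.Perm (Fin (len a b d))) :
    IsSYT (rect a b) (Tf a b σ) := by
  have key : ∀ {i j : ℕ}, i < a → j < b →
      off a b (i + j) + 1 ≤ Tf a b σ (i, j) ∧
        Tf a b σ (i, j) ≤ off a b (i + j) + len a b (i + j) := by
    intro i j hi hj
    have hd := diag_lt hi hj
    have hr := rank_lt hi hj
    have hlt := app_lt_len σ hd hr
    have e : Tf a b σ (i, j) =
        off a b (i + j) + app a b σ (i + j) (i - i0 b (i + j)) + 1 := by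
      rw [Tf, if_pos (show (i, j).1 < a ∧ (i, j).2 < b from ⟨hi, hj⟩)]
    omega
  refine ⟨?_, ?_, ?_, ?_, ?_⟩
  · rintro ⟨i, j⟩ hc
    rw [YoungDiagram.mem_cells, mem_rect] at hc
    have hi : i < a := hc.1
    have hj : j < b := hc.2
    obtain ⟨h1, h2⟩ := key hi hj
    rw [Finset.mem_Icc, card_rect]
    have h3 : off a b (i + j) + len a b (i + j) ≤ off a b (a + b - 1) :=
      off_add_len_le (diag_lt hi hj)
    have h4 : off a b (a + b - 1) ≤ a * b := off_le le_rfl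
    omega
  · rintro ⟨i, j⟩ hc
    rw [YoungDiagram.mem_cells, mem_rect] at hc
    rw [Tf, if_neg (by simpa using hc)]
  · rintro ⟨i, j⟩ hc ⟨i', j'⟩ hc' heq
    rw [Finset.mem_coe, YoungDiagram.mem_cells, mem_rect] at hc hc'
    have hi : i < a := hc.1
    have hj : j < b := hc.2
    have hi' : i' < a := hc'.1
    have hj' : j' < b := hc'.2
    obtain ⟨h1, h2⟩ := key hi hj
    obtain ⟨h1', h2'⟩ := key hi' hj'
    have hd : i + j = i' + j' := by
      rcases lt_trichotomy (i + j) (i' + j') with h | h | h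
      · have := off_add_len_le (a := a) (b := b) h
        omega
      · exact h
      · have := off_add_len_le (a := a) (b := b) h
        omega
    have happ : app a b σ (i + j) (i - i0 b (i + j))
        = app a b σ (i + j) (i' - i0 b (i + j)) := by
      have e1 : Tf a b σ (i, j) = off a b (i + j) + app a b σ (i + j) (i - i0 b (i + j)) + 1 := by
        rw [Tf, if_pos ⟨hi, hj⟩]
      have e2 : Tf a b σ (i', j') =
          off a b (i' + j') + app a b σ (i' + j') (i' - i0 b (i' + j')) + 1 := by
        rw [Tf, if_pos ⟨hi', hj'⟩]
      rw [e1, e2, ← hd] at heq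
      omega
    have hr' : i' - i0 b (i + j) < len a b (i + j) := by
      rw [hd]; exact rank_lt hi' hj'
    have hrk := app_inj σ (diag_lt hi hj) (rank_lt hi hj) hr' happ
    have hi0 : i0 b (i + j) ≤ i := by unfold i0; omega
    have hi0' : i0 b (i + j) ≤ i' := by unfold i0; omega
    have hii : i = i' := by omega
    exact Prod.ext hii (by omega)
  · intro i j1 j2 hj hm
    rw [mem_rect] at hm
    have hi : i < a := hm.1
    have hj2 : j2 < b := hm.2
    have hj1 : j1 < b := hj.trans hj2
    obtain ⟨h1, h2⟩ := key hi hj1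
    obtain ⟨h1', h2'⟩ := key hi hj2
    have := off_add_len_le (a := a) (b := b) (show i + j1 < i + j2 by omega)
    omega
  · intro i1 i2 j hi hm
    rw [mem_rect] at hm
    have hi2 : i2 < a := hm.1
    have hj : j < b := hm.2
    have hi1 : i1 < a := hi.trans hi2
    obtain ⟨h1, h2⟩ := key hi1 hj
    obtain ⟨h1', h2'⟩ := key hi2 hj
    have := off_add_len_le (a := a) (b := b) (show i1 + j < i2 + j by omega)
    omega


lemma Tf_eval {a b : ℕ} (σ : ∀ d : Fin (a + b - 1), Equiv.Perm (Fin (len a b d)))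
    {i j : ℕ} (hi : i < a) (hj : j < b) :
    Tf a b σ (i, j) = off a b (i + j) + app a b σ (i + j) (i - i0 b (i + j)) + 1 := by
  rw [Tf, if_pos (show (i, j).1 < a ∧ (i, j).2 < b from ⟨hi, hj⟩)]

lemma Tf_injective (a b : ℕ) :
    Function.Injective
      (fun σ : ∀ d : Fin (a + b - 1), Equiv.Perm (Fin (len a b d)) => Tf a b σ) := by
  intro σ σ' h
  replace h : Tf a b σ = Tf a b σ' := h
  funext d
  apply Equiv.ext
  intro r
  apply Fin.ext
  obtain ⟨h1, h2, h3, h4⟩ := cell_spec (a := a) (b := b) (d := ↑d) r.isLt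
  have e := congrFun h (i0 b ↑d + ↑r, ↑d - (i0 b ↑d + ↑r))
  rw [Tf_eval σ h1 h2, Tf_eval σ' h1 h2, h3, h4] at e
  have e2 : app a b σ ↑d ↑r = app a b σ' ↑d ↑r := by omega
  rw [app, dif_pos ⟨d.isLt, r.isLt⟩, app, dif_pos ⟨d.isLt, r.isLt⟩] at e2
  exact e2

instance syt_finite (μ : YoungDiagram) : Finite {T : ℕ × ℕ → ℕ // IsSYT μ T} := by
  let f : {T : ℕ × ℕ → ℕ // IsSYT μ T} → (↥μ.cells → Fin (μ.card + 1)) := fun T c =>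
    ⟨T.1 c, by
      have := T.2.1 c c.2
      rw [Finset.mem_Icc] at this
      omega⟩
  have hf : Function.Injective f := by
    intro T T' h
    apply Subtype.ext
    funext c
    by_cases hc : c ∈ μ.cells
    · exact congrArg Fin.val (congrFun h ⟨c, hc⟩)
    · rw [T.2.2.1 c hc, T'.2.2.1 c hc]
  exact Finite.of_injective f hf

lemma prod_le_fdeg (a b : ℕ) :
    ∏ d ∈ Finset.range (a + b - 1), (len a b d).factorial ≤ fdeg (rect a b) := by
  have h1 : Nat.card (∀ d : Fin (a + b - 1), Equiv.Perm (Fin (len a b ↑d)))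
      ≤ fdeg (rect a b) :=
    Nat.card_le_card_of_injective
      (fun σ => (⟨Tf a b σ, Tf_isSYT a b σ⟩ : {T // IsSYT (rect a b) T}))
      (fun σ σ' hh => Tf_injective a b (congrArg Subtype.val hh))
  calc ∏ d ∈ Finset.range (a + b - 1), (len a b d).factorial
      = ∏ d : Fin (a + b - 1), (len a b ↑d).factorial :=
        (Fin.prod_univ_eq_prod_range _ _).symm
    _ = Nat.card (∀ d : Fin (a + b - 1), Equiv.Perm (Fin (len a b ↑d))) := by
        rw [Nat.card_pi]
        apply Finset.prod_congr rfl
        intro d _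
        simp [Nat.card_eq_fintype_card, Fintype.card_perm]
    _ ≤ _ := h1


lemma pow_sub_le_factorial (M L : ℕ) : M ^ (L - M) ≤ L.factorial := by
  induction L with
  | zero => simp
  | succ L ih =>
    rcases Nat.lt_or_ge L M with h | h
    · have h0 : L + 1 - M = 0 := by omega
      simpa [h0] using Nat.succ_le_of_lt (Nat.factorial_pos (L + 1))
    · have h2 : L + 1 - M = (L - M) + 1 := by omega
      rw [h2, pow_succ, Nat.factorial_succ]
      calc M ^ (L - M) * M ≤ L.factorial * (L + 1) := Nat.mul_le_mul ih (by omega)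
        _ = (L + 1) * L.factorial := Nat.mul_comm _ _

lemma sub_mul_le_sum (f : ℕ → ℕ) (D M : ℕ) :
    (∑ d ∈ Finset.range D, f d) - M * D ≤ ∑ d ∈ Finset.range D, (f d - M) := by
  induction D with
  | zero => simp
  | succ D ih =>
    rw [Finset.sum_range_succ, Finset.sum_range_succ]
    have : M * (D + 1) = M * D + M := by ring
    omega

lemma numeric (K a b : ℕ) (hK : 1 ≤ K) (ha1 : 1 ≤ a) (hb1 : 1 ≤ b)
    (haK : 4 * K ^ 2 ≤ a) (hbK : 4 * K ^ 2 ≤ b) :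
    K ^ (a * b) ≤ ∏ d ∈ Finset.range (a + b - 1), (len a b d).factorial := by
  set M := K ^ 2 with hM
  set D := a + b - 1 with hD
  set S := ∑ d ∈ Finset.range D, (len a b d - M) with hS
  have hSig : a * b - M * D ≤ S := by
    rw [hS, ← sum_len a b]
    exact sub_mul_le_sum _ _ _
  have hMD : M * D ≤ M * a + M * b := by
    calc M * D ≤ M * (a + b) := Nat.mul_le_mul_left M (by omega)
      _ = M * a + M * b := by ring
  have h4a : 4 * (M * a) ≤ a * b := by
    calc 4 * (M * a) = (4 * M) * a := by ring
      _ ≤ b * a := Nat.mul_le_mul_right a (by omega)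
      _ = a * b := Nat.mul_comm _ _
  have h4b : 4 * (M * b) ≤ a * b := by
    calc 4 * (M * b) = (4 * M) * b := by ring
      _ ≤ a * b := Nat.mul_le_mul_right b (by omega)
  have h2S : a * b ≤ 2 * S := by omega
  calc K ^ (a * b) ≤ K ^ (2 * S) := Nat.pow_le_pow_right hK h2S
    _ = M ^ S := by rw [hM, ← pow_mul]
    _ = ∏ d ∈ Finset.range D, M ^ (len a b d - M) := by
        rw [hS, ← Finset.prod_pow_eq_pow_sum]
    _ ≤ ∏ d ∈ Finset.range D, (len a b d).factorial :=
        Finset.prod_le_prod' fun d _ => pow_sub_le_factorial M (len a b d)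

end Stmt6Aux

/-- if `a_s, b_s → ∞` are sequences of positive integers and
`μ(s) = (b_s^{a_s})`, then for every `β > 0` eventually `f^{μ(s)} > β^{a_s b_s}`. -/
theorem stmt6 (a b : ℕ → ℕ) (ha : ∀ s, 1 ≤ a s) (hb : ∀ s, 1 ≤ b s)
    (hta : Filter.Tendsto a Filter.atTop Filter.atTop)
    (htb : Filter.Tendsto b Filter.atTop Filter.atTop)
    (β : ℝ) (hβ : 0 < β) :
    ∃ s0 : ℕ, ∀ s ≥ s0, β ^ (a s * b s) < (fdeg (rect (a s) (b s)) : ℝ) := by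
  set K : ℕ := ⌈β⌉₊ + 1 with hK
  have hβK : β < (K : ℕ) := by
    have := Nat.le_ceil β
    push_cast [hK]
    linarith
  have hK1 : 1 ≤ K := by omega
  set N : ℕ := 4 * K ^ 2 with hN
  have hev : ∀ᶠ s in Filter.atTop, N ≤ a s ∧ N ≤ b s :=
    (hta.eventually_ge_atTop N).and (htb.eventually_ge_atTop N)
  obtain ⟨s0, hs0⟩ := Filter.eventually_atTop.mp hev
  refine ⟨s0, fun s hs => ?_⟩
  obtain ⟨haN, hbN⟩ := hs0 s hs
  have hchain : K ^ (a s * b s) ≤ fdeg (rect (a s) (b s)) :=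
    le_trans (Stmt6Aux.numeric K (a s) (b s) hK1 (ha s) (hb s) haN hbN)
      (Stmt6Aux.prod_le_fdeg _ _)
  have hne : a s * b s ≠ 0 := by
    have := ha s; have := hb s; positivity
  calc β ^ (a s * b s) < (K : ℝ) ^ (a s * b s) := by
        exact pow_lt_pow_left₀ hβK hβ.le hne
    _ ≤ (fdeg (rect (a s) (b s)) : ℝ) := by
        have : ((K ^ (a s * b s) : ℕ) : ℝ) ≤ ((fdeg (rect (a s) (b s)) : ℕ) : ℝ) :=
          Nat.cast_le.mpr hchain
        rw [Nat.cast_pow] at this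
        exact this
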